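/- For γ = (α, β) ∈ [0, π/2)² with α, β < π/2, the inverse of the Kreĭn–Feller operator Δ_{ν,Λ} with Robin boundary conditions admits the kernel representation (Δ_{ν,Λ}^{-1} g)(x) = ∫ K_{α,β}(x,y) g(y) dν(y), where K_{α,β}(x,y) = A_{α,β}(1 + tan β − y)(tan α + x) + 1_{[0,x]}(y)(x − y) and A_{α,β} = −1/(1 + tan α + tan β). -/

import Mathlib

open MeasureTheory Set Filter

/-- Distribution function of a measure on `[0,1]`. -/
noncomputable def Fdist (μ : Measure ℝ) (x : ℝ) : ℝ := (μ (Set.Icc 0 x)).toReal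

/-- Pseudo-inverse of the distribution function. -/
noncomputable def Finv (μ : Measure ℝ) (x : ℝ) : ℝ :=
  sInf {y ∈ Set.Icc (0:ℝ) 1 | x ≤ Fdist μ y}

/-- Topological support of a measure. -/
def msupport (μ : Measure ℝ) : Set ℝ := {x | ∀ U : Set ℝ, IsOpen U → x ∈ U → 0 < μ U}

theorem stmt_8 (ν : Measure ℝ) [IsProbabilityMeasure ν]
    (hνc : ν (Set.Icc (0:ℝ) 1)ᶜ = 0) (hν0 : ν {(0:ℝ)} = 0) (hν1 : ν {(1:ℝ)} = 0)
    (α β : ℝ) (hα : α ∈ Set.Ico 0 (Real.pi/2)) (hβ : β ∈ Set.Ico 0 (Real.pi/2))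
    (g : ℝ → ℝ) (hg : MemLp g 2 ν)
    (f : ℝ → ℝ) (b : ℝ) (hfc : Continuous f)
    (hf : ∀ x ∈ Set.Icc (0:ℝ) 1,
      f x = f 0 + b * x + ∫ y in Set.Icc 0 x, (x - y) * g y ∂ν)
    (hbc0 : f 0 * Real.cos α - b * Real.sin α = 0)
    (hbc1 : f 1 * Real.cos β + (b + ∫ y, g y ∂ν) * Real.sin β = 0) :
    ∀ x ∈ Set.Icc (0:ℝ) 1,
      f x = ∫ y,
        ((-(1 + Real.tan α + Real.tan β)⁻¹) * (1 + Real.tan β - y) * (Real.tan α + x)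
          + Set.indicator (Set.Icc 0 x) (fun y => x - y) y) * g y ∂ν := by
  intro x hx
  set T := Real.tan α with hT
  set S := Real.tan β with hS
  have hcα : 0 < Real.cos α :=
    Real.cos_pos_of_mem_Ioo ⟨by linarith [hα.1, Real.pi_pos], hα.2⟩
  have hcβ : 0 < Real.cos β :=
    Real.cos_pos_of_mem_Ioo ⟨by linarith [hβ.1, Real.pi_pos], hβ.2⟩
  have hTnn : 0 ≤ T := Real.tan_nonneg_of_nonneg_of_le_pi_div_two hα.1 hα.2.le
  have hSnn : 0 ≤ S := Real.tan_nonneg_of_nonneg_of_le_pi_div_two hβ.1 hβ.2.le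
  have hc : (1 + T + S) ≠ 0 := by positivity
  -- a.e. membership
  have hmem : ∀ᵐ y ∂ν, y ∈ Set.Icc (0:ℝ) 1 := by
    rw [ae_iff]
    rw [show {a | ¬ a ∈ Set.Icc (0:ℝ) 1} = (Set.Icc (0:ℝ) 1)ᶜ from rfl]
    exact hνc
  have hgm : AEStronglyMeasurable g ν := hg.1
  have hgi : Integrable g ν := hg.integrable one_le_two
  have hyg : Integrable (fun y => y * g y) ν := by
    refine hgi.abs.mono' (aestronglyMeasurable_id.mul hgm) ?_
    filter_upwards [hmem] with y hy
    rw [norm_mul, Real.norm_eq_abs, Real.norm_eq_abs]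
    calc |y| * |g y| ≤ 1 * |g y| := by
          apply mul_le_mul_of_nonneg_right _ (abs_nonneg _)
          rw [abs_le]; exact ⟨by linarith [hy.1], hy.2⟩
      _ = |g y| := one_mul _
  have hrestr : ν.restrict (Set.Icc (0:ℝ) 1) = ν :=
    Measure.restrict_eq_self_of_ae_mem hmem
  -- indicator integrability, for any z ∈ [0,1]
  have hind : ∀ z ∈ Set.Icc (0:ℝ) 1,
      Integrable (fun y => Set.indicator (Set.Icc 0 z) (fun y => z - y) y * g y) ν := by
    intro z hz
    refine hgi.abs.mono'
      ((((measurable_const.sub measurable_id).indicator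
        measurableSet_Icc).aestronglyMeasurable).mul hgm) ?_
    filter_upwards [hmem] with y hy
    rw [norm_mul, Real.norm_eq_abs, Real.norm_eq_abs]
    by_cases hyz : y ∈ Set.Icc 0 z
    · rw [Set.indicator_of_mem hyz]
      calc |z - y| * |g y| ≤ 1 * |g y| := by
            apply mul_le_mul_of_nonneg_right _ (abs_nonneg _)
            rw [abs_le]; constructor <;> [linarith [hyz.1, hyz.2, hz.1]; skip]
            linarith [hyz.1, hyz.2, hz.2]
        _ = |g y| := one_mul _
    · rw [Set.indicator_of_notMem hyz]; simpa using abs_nonneg (g y)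
  have hindint : ∀ z : ℝ,
      (∫ y, Set.indicator (Set.Icc 0 z) (fun y => z - y) y * g y ∂ν)
        = ∫ y in Set.Icc 0 z, (z - y) * g y ∂ν := by
    intro z
    rw [← integral_indicator measurableSet_Icc]
    congr 1
    funext y
    by_cases hyz : y ∈ Set.Icc 0 z <;>
      simp [Set.indicator_of_mem, Set.indicator_of_notMem, hyz]
  -- key values
  set I1 := ∫ y, g y ∂ν with hI1
  set I2 := ∫ y, y * g y ∂ν with hI2
  have hf0 : f 0 = b * T := by
    rw [hT, Real.tan_eq_sin_div_cos]
    field_simp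
    linarith [hbc0]
  have hf1 : f 1 = b * T + b + (I1 - I2) := by
    have h1 : f 1 = f 0 + b * 1 + ∫ y in Set.Icc 0 1, (1 - y) * g y ∂ν :=
      hf 1 (by norm_num)
    have h2 : (∫ y in Set.Icc (0:ℝ) 1, (1 - y) * g y ∂ν) = I1 - I2 := by
      rw [hrestr, hI1, hI2, ← integral_sub hgi hyg]
      congr 1; funext y; ring
    rw [h1, h2, hf0]; ring
  have hb : b * (1 + T + S) = I2 - (1 + S) * I1 := by
    have hSd : S = Real.sin β / Real.cos β := Real.tan_eq_sin_div_cos β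
    have key : (b * (1 + T + S) - (I2 - (1 + S) * I1)) * Real.cos β = 0 := by
      have : (b * (1 + T + S) - (I2 - (1 + S) * I1)) * Real.cos β
          = f 1 * Real.cos β + (b + I1) * Real.sin β := by
        rw [hf1, hSd]; field_simp; ring
      rw [this]; exact hbc1
    have := mul_eq_zero.mp key
    rcases this with h | h
    · linarith
    · exact absurd h (ne_of_gt hcβ)
  have hbval : b = (-(1 + T + S)⁻¹) * ((1 + S) * I1 - I2) := by
    field_simp
    linarith [hb]
  -- rewrite target integral
  have heq : (fun y => ((-(1 + T + S)⁻¹) * (1 + S - y) * (T + x)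
          + Set.indicator (Set.Icc 0 x) (fun y => x - y) y) * g y)
      = fun y => (((-(1 + T + S)⁻¹) * (1 + S) * (T + x)) * g y
        + (-((-(1 + T + S)⁻¹) * (T + x))) * (y * g y))
          + Set.indicator (Set.Icc 0 x) (fun y => x - y) y * g y := by
    funext y; ring
  have hA : Integrable (fun y => ((-(1 + T + S)⁻¹) * (1 + S) * (T + x)) * g y
      + (-((-(1 + T + S)⁻¹) * (T + x))) * (y * g y)) ν :=
    (hgi.const_mul _).add (hyg.const_mul _)
  have hB : Integrable (fun y => ((-(1 + T + S)⁻¹) * (1 + S) * (T + x)) * g y) ν :=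
    hgi.const_mul _
  have hC : Integrable (fun y => (-((-(1 + T + S)⁻¹) * (T + x))) * (y * g y)) ν :=
    hyg.const_mul _
  rw [heq, integral_add hA (hind x hx),
    integral_add hB hC,
    integral_const_mul, integral_const_mul, hindint, hf x hx, hf0, hbval]
  rw [← hI1, ← hI2]
  ring
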